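/- arXiv:0901.1070 — 2 statements merged into one kernel-verified Lean document; each statement's English description precedes it below -/
import Mathlib

section
/- Gauge invariance of the Griffiths–Newing covector: let ϑ be a continuously differentiable coframe on U and f : U → ℂ continuously differentiable; define the transformed coframe ϑ̃ by l̃ := l, m̃ := m + f l, ñ := n + f m̄ + f̄ m + |f|² l, i.e. ϑ̃⁰ := (l̃+ñ)/2, ϑ̃¹ := Re m̃, ϑ̃² := Im m̃, ϑ̃³ := (l̃−ñ)/2 (these are real covector fields and ϑ̃ is a coframe). Then ϑ̃ defines the same metric, g̃_{αβ} = g_{αβ}, and the covector field ṽ built from ϑ̃ by the same formula coincides with v: ṽ_α = v_α at every point of U. -/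
noncomputable section

open scoped Matrix

/-- Points of ℝ⁴. -/
abbrev Pt : Type := Fin 4 → ℝ

/-- Partial derivative ∂_α of a function on ℝ⁴. -/
def pd {E : Type*} [NormedAddCommGroup E] [NormedSpace ℝ E]
    (α : Fin 4) (f : Pt → E) (x : Pt) : E :=
  fderiv ℝ f x (Pi.single α 1)

/-- o_{jk} = o^{jk} = diag(1,-1,-1,-1). -/
def oM : Fin 4 → Fin 4 → ℝ := fun j k => if j = k then (if j = 0 then 1 else -1) else 0

/-- Totally antisymmetric symbol, ε_{0123} = 1. -/
def eps (a b c d : Fin 4) : ℝ :=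
  ∑ σ : Equiv.Perm (Fin 4),
    if σ 0 = a ∧ σ 1 = b ∧ σ 2 = c ∧ σ 3 = d then ((Equiv.Perm.sign σ : ℤ) : ℝ) else 0

/-- Determinant det(ϑ^j_α) of a coframe. -/
def cofDet (ϑ : Fin 4 → Pt → Fin 4 → ℝ) (x : Pt) : ℝ :=
  Matrix.det (Matrix.of fun j α => ϑ j x α)

/-- l := ϑ⁰ + ϑ³. -/
def lC (ϑ : Fin 4 → Pt → Fin 4 → ℝ) (x : Pt) (α : Fin 4) : ℂ :=
  (ϑ 0 x α : ℂ) + (ϑ 3 x α : ℂ)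

/-- m := ϑ¹ + iϑ². -/
def mC (ϑ : Fin 4 → Pt → Fin 4 → ℝ) (x : Pt) (α : Fin 4) : ℂ :=
  (ϑ 1 x α : ℂ) + Complex.I * (ϑ 2 x α : ℂ)

/-- n := ϑ⁰ - ϑ³. -/
def nC (ϑ : Fin 4 → Pt → Fin 4 → ℝ) (x : Pt) (α : Fin 4) : ℂ :=
  (ϑ 0 x α : ℂ) - (ϑ 3 x α : ℂ)

/-- The teleparallel Lagrangian density
λ(l,m,n) := (1/6) ε^{αβγδ} l_α (n_β ∂_γ l_δ − m̄_β ∂_γ m_δ − m_β ∂_γ m̄_δ). -/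
def lam (l m n : Pt → Fin 4 → ℂ) (x : Pt) : ℂ :=
  (1/6 : ℂ) * ∑ α : Fin 4, ∑ β : Fin 4, ∑ γ : Fin 4, ∑ δ : Fin 4,
    (eps α β γ δ : ℂ) * l x α *
      (n x β * pd γ (fun y => l y δ) x
        - (starRingEnd ℂ) (m x β) * pd γ (fun y => m y δ) x
        - m x β * pd γ (fun y => (starRingEnd ℂ) (m y δ)) x)

/-- (du)_{αβ} := ∂_α u_β − ∂_β u_α. -/
def dcov (u : Pt → Fin 4 → ℝ) (α β : Fin 4) (x : Pt) : ℝ :=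
  pd α (fun y => u y β) x - pd β (fun y => u y α) x

/-- Axial torsion T^ax(ϑ)_{αβγ}. -/
def Tax (ϑ : Fin 4 → Pt → Fin 4 → ℝ) (α β γ : Fin 4) (x : Pt) : ℝ :=
  (1/3 : ℝ) * ∑ j : Fin 4, ∑ k : Fin 4, oM j k *
    (ϑ j x α * dcov (ϑ k) β γ x + ϑ j x β * dcov (ϑ k) γ α x + ϑ j x γ * dcov (ϑ k) α β x)

/-- Metric g_{αβ} := o_{jk} ϑ^j_α ϑ^k_β. -/
def gmat (ϑ : Fin 4 → Pt → Fin 4 → ℝ) (x : Pt) : Matrix (Fin 4) (Fin 4) ℝ :=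
  Matrix.of fun α β => ∑ j : Fin 4, ∑ k : Fin 4, oM j k * ϑ j x α * ϑ k x β

/-- Inverse metric g^{αβ}. -/
def ginv (ϑ : Fin 4 → Pt → Fin 4 → ℝ) (x : Pt) : Matrix (Fin 4) (Fin 4) ℝ :=
  (gmat ϑ x)⁻¹

/-- Christoffel symbols Γ^β_{αγ}. -/
def Chr (ϑ : Fin 4 → Pt → Fin 4 → ℝ) (β α γ : Fin 4) (x : Pt) : ℝ :=
  (1/2 : ℝ) * ∑ δ : Fin 4, ginv ϑ x β δ *
    (pd α (fun y => gmat ϑ y γ δ) x + pd γ (fun y => gmat ϑ y α δ) x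
      - pd δ (fun y => gmat ϑ y α γ) x)

/-- Levi-Civita covariant derivative ∇_α u_β of a complex covector field. -/
def covC (ϑ : Fin 4 → Pt → Fin 4 → ℝ) (u : Pt → Fin 4 → ℂ) (α β : Fin 4) (x : Pt) : ℂ :=
  pd α (fun y => u y β) x - ∑ γ : Fin 4, (Chr ϑ γ α β x : ℂ) * u x γ

/-- Levi-Civita covariant derivative ∇_γ F_{αβ} of a complex 2-form. -/
def covF (ϑ : Fin 4 → Pt → Fin 4 → ℝ) (F : Pt → Fin 4 → Fin 4 → ℂ) (γ α β : Fin 4) (x : Pt) : ℂ :=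
  pd γ (fun y => F y α β) x - ∑ δ : Fin 4, (Chr ϑ δ γ α x : ℂ) * F x δ β
    - ∑ δ : Fin 4, (Chr ϑ δ γ β x : ℂ) * F x α δ

/-- The 2-form (l∧m)_{αβ}. -/
def lmForm (ϑ : Fin 4 → Pt → Fin 4 → ℝ) (x : Pt) (α β : Fin 4) : ℂ :=
  lC ϑ x α * mC ϑ x β - lC ϑ x β * mC ϑ x α

/-- The Griffiths–Newing covector v_α := ∇^β (l∧m)_{αβ} − m^β ∇_α l_β. -/
def vGN (ϑ : Fin 4 → Pt → Fin 4 → ℝ) (α : Fin 4) (x : Pt) : ℂ :=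
  (∑ β : Fin 4, ∑ γ : Fin 4, (ginv ϑ x β γ : ℂ) * covF ϑ (fun y a b => lmForm ϑ y a b) γ α β x)
  - ∑ β : Fin 4, ∑ γ : Fin 4, (ginv ϑ x β γ : ℂ) * mC ϑ x γ * covC ϑ (fun y b => lC ϑ y b) α β x

/-- l^α := g^{αβ} l_β. -/
def lup (ϑ : Fin 4 → Pt → Fin 4 → ℝ) (x : Pt) (α : Fin 4) : ℂ :=
  ∑ β : Fin 4, (ginv ϑ x α β : ℂ) * lC ϑ x β

/-- Divergence ∇_α l^α := ∂_α l^α + Γ^α_{αγ} l^γ. -/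
def divl (ϑ : Fin 4 → Pt → Fin 4 → ℝ) (x : Pt) : ℂ :=
  ∑ α : Fin 4, (pd α (fun y => lup ϑ y α) x
    + ∑ γ : Fin 4, (Chr ϑ α α γ x : ℂ) * lup ϑ x γ)

/-- Components of the 4-form L_tele(ϑ) = l ∧ T^ax. -/
def LteleForm (ϑ : Fin 4 → Pt → Fin 4 → ℝ) (α β γ δ : Fin 4) (x : Pt) : ℂ :=
  lC ϑ x α * (Tax ϑ β γ δ x : ℂ) - lC ϑ x β * (Tax ϑ α γ δ x : ℂ)
    + lC ϑ x γ * (Tax ϑ α β δ x : ℂ) - lC ϑ x δ * (Tax ϑ α β γ x : ℂ)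

/-- Hodge star of a complex 4-form: ★F := (1/24) √|det g| F^{αβγδ} ε_{αβγδ}. -/
def star4C (ϑ : Fin 4 → Pt → Fin 4 → ℝ) (F : Fin 4 → Fin 4 → Fin 4 → Fin 4 → ℂ) (x : Pt) : ℂ :=
  (1/24 : ℂ) * (cofDet ϑ x : ℂ) *
    ∑ α : Fin 4, ∑ β : Fin 4, ∑ γ : Fin 4, ∑ δ : Fin 4,
      ∑ α' : Fin 4, ∑ β' : Fin 4, ∑ γ' : Fin 4, ∑ δ' : Fin 4,
        (ginv ϑ x α α' : ℂ) * (ginv ϑ x β β' : ℂ) * (ginv ϑ x γ γ' : ℂ) * (ginv ϑ x δ δ' : ℂ) *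
          F α' β' γ' δ' * (eps α β γ δ : ℂ)

/-- Hodge star of a real 4-form. -/
def star4 (ϑ : Fin 4 → Pt → Fin 4 → ℝ) (F : Fin 4 → Fin 4 → Fin 4 → Fin 4 → ℝ) (x : Pt) : ℝ :=
  (1/24 : ℝ) * cofDet ϑ x *
    ∑ α : Fin 4, ∑ β : Fin 4, ∑ γ : Fin 4, ∑ δ : Fin 4,
      ∑ α' : Fin 4, ∑ β' : Fin 4, ∑ γ' : Fin 4, ∑ δ' : Fin 4,
        ginv ϑ x α α' * ginv ϑ x β β' * ginv ϑ x γ γ' * ginv ϑ x δ δ' *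
          F α' β' γ' δ' * eps α β γ δ

/-- ★L_tele(ϑ). -/
def starLtele (ϑ : Fin 4 → Pt → Fin 4 → ℝ) (x : Pt) : ℂ :=
  star4C ϑ (fun α β γ δ => LteleForm ϑ α β γ δ x) x


/-- Pauli matrices s₀, s₁, s₂, s₃. -/
def sP : Fin 4 → Matrix (Fin 2) (Fin 2) ℂ :=
  ![!![1, 0; 0, 1], !![0, 1; 1, 0], !![0, Complex.I; -Complex.I, 0], !![1, 0; 0, -1]]

/-- The matrix E. -/
def EM : Matrix (Fin 2) (Fin 2) ℂ := !![0, 1; -1, 0]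

/-- Pauli matrices of the coframe: σ_α := ϑ^j_α s_j. -/
def sigLow (ϑ : Fin 4 → Pt → Fin 4 → ℝ) (x : Pt) (α : Fin 4) : Matrix (Fin 2) (Fin 2) ℂ :=
  ∑ j : Fin 4, (ϑ j x α : ℂ) • sP j

/-- σ^α := g^{αβ} σ_β. -/
def sigUp (ϑ : Fin 4 → Pt → Fin 4 → ℝ) (x : Pt) (α : Fin 4) : Matrix (Fin 2) (Fin 2) ℂ :=
  ∑ β : Fin 4, (ginv ϑ x α β : ℂ) • sigLow ϑ x β

/-- σ̂_β := E σ_β Eᵀ. -/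
def sigHat (ϑ : Fin 4 → Pt → Fin 4 → ℝ) (x : Pt) (β : Fin 4) : Matrix (Fin 2) (Fin 2) ℂ :=
  EM * sigLow ϑ x β * EMᵀ

/-- Covariant derivative of a spinor field:
∇_α ξ^a := ∂_α ξ^a + (1/4) (σ̂_β)^{aċ} (∂_α (σ^β)_{bċ} + Γ^β_{αγ} (σ^γ)_{bċ}) ξ^b. -/
def covSpin (ϑ : Fin 4 → Pt → Fin 4 → ℝ) (ξ : Pt → Fin 2 → ℂ) (α : Fin 4) (a : Fin 2)
    (x : Pt) : ℂ :=
  pd α (fun y => ξ y a) x + (1/4 : ℂ) * ∑ β : Fin 4, ∑ b : Fin 2, ∑ c : Fin 2,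
    sigHat ϑ x β a c *
      (pd α (fun y => sigUp ϑ y β b c) x
        + ∑ γ : Fin 4, (Chr ϑ β α γ x : ℂ) * sigUp ϑ x γ b c) * ξ x b

/-- The Weyl Lagrangian density
L_W(ξ) := (i/2)(ξ̄^ḃ (σ^α)_{aḃ} ∇_α ξ^a − ξ^a (σ^α)_{aḃ} ∇_α ξ̄^ḃ) · det(ϑ^j_α). -/
def LW (ϑ : Fin 4 → Pt → Fin 4 → ℝ) (ξ : Pt → Fin 2 → ℂ) (x : Pt) : ℂ :=
  (Complex.I / 2) *
    (∑ α : Fin 4, ∑ a : Fin 2, ∑ b : Fin 2,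
      ((starRingEnd ℂ) (ξ x b) * sigUp ϑ x α a b * covSpin ϑ ξ α a x
        - ξ x a * sigUp ϑ x α a b * (starRingEnd ℂ) (covSpin ϑ ξ α b x))) *
    (cofDet ϑ x : ℂ)

/-- p_j := (1,0,0,1). -/
def pvec : Fin 4 → ℝ := ![1, 0, 0, 1]

/-- p^j := o^{jk} p_k = (1,0,0,-1). -/
def pup : Fin 4 → ℝ := ![1, 0, 0, -1]

/-- Wedge of two 2-forms (G∧F)_{αβγδ}. -/
def w22 (G F : Fin 4 → Fin 4 → ℝ) (α β γ δ : Fin 4) : ℝ :=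
  G α β * F γ δ - G α γ * F β δ + G α δ * F β γ
    + F α β * G γ δ - F α γ * G β δ + F α δ * G β γ

/-- Triple wedge (a∧b∧c)_{αβγ} of covector fields. -/
def triple (a b c : Pt → Fin 4 → ℝ) (x : Pt) (α β γ : Fin 4) : ℝ :=
  a x α * (b x β * c x γ - b x γ * c x β)
    + a x β * (b x γ * c x α - b x α * c x γ)
    + a x γ * (b x α * c x β - b x β * c x α)

/-- Exterior derivative of a 3-form: (dT)_{αβγδ}. -/
def d3 (T : Pt → Fin 4 → Fin 4 → Fin 4 → ℝ) (α β γ δ : Fin 4) (x : Pt) : ℝ :=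
  pd α (fun y => T y β γ δ) x - pd β (fun y => T y α γ δ) x
    + pd γ (fun y => T y α β δ) x - pd δ (fun y => T y α β γ) x

/-- The 4-form p^i o_{lk} (ϑ^j∧ϑ^l)∧dϑ^k − p^j o_{lk} (ϑ^i∧ϑ^l)∧dϑ^k − 2 p_k d(ϑ^k∧ϑ^i∧ϑ^j). -/
def Gform (ϑ : Fin 4 → Pt → Fin 4 → ℝ) (i j : Fin 4) (α β γ δ : Fin 4) (x : Pt) : ℝ :=
  (∑ l : Fin 4, ∑ k : Fin 4, pup i * oM l k *
    w22 (fun a b => ϑ j x a * ϑ l x b - ϑ j x b * ϑ l x a)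
      (fun a b => dcov (ϑ k) a b x) α β γ δ)
  - (∑ l : Fin 4, ∑ k : Fin 4, pup j * oM l k *
    w22 (fun a b => ϑ i x a * ϑ l x b - ϑ i x b * ϑ l x a)
      (fun a b => dcov (ϑ k) a b x) α β γ δ)
  - 2 * ∑ k : Fin 4, pvec k * d3 (fun y a b c => triple (ϑ k) (ϑ i) (ϑ j) y a b c) α β γ δ x

/-- The field-equation scalars G^{ij}. -/
def GScal (ϑ : Fin 4 → Pt → Fin 4 → ℝ) (i j : Fin 4) (x : Pt) : ℝ :=
  star4 ϑ (fun α β γ δ => Gform ϑ i j α β γ δ x) x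

/-- Hodge star of a covector field: (★u)_{βγδ} := √|det g| u^α ε_{αβγδ}. -/
def starCov (ϑ : Fin 4 → Pt → Fin 4 → ℝ) (u : Pt → Fin 4 → ℝ) (β γ δ : Fin 4) (x : Pt) : ℝ :=
  cofDet ϑ x * ∑ α : Fin 4, (∑ μ : Fin 4, ginv ϑ x α μ * u x μ) * eps α β γ δ

/-- ‖T^ax‖² := g^{αα′} g^{ββ′} g^{γγ′} T^ax_{αβγ} T^ax_{α′β′γ′}. -/
def normTaxSq (ϑ : Fin 4 → Pt → Fin 4 → ℝ) (x : Pt) : ℝ :=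
  ∑ α : Fin 4, ∑ α' : Fin 4, ∑ β : Fin 4, ∑ β' : Fin 4, ∑ γ : Fin 4, ∑ γ' : Fin 4,
    ginv ϑ x α α' * ginv ϑ x β β' * ginv ϑ x γ γ' * Tax ϑ α β γ x * Tax ϑ α' β' γ' x

/-- Density of the quadratic teleparallel Lagrangian L(ϑ,s) := s‖T^ax‖² ∗1. -/
def quadDensity (ϑ : Fin 4 → Pt → Fin 4 → ℝ) (s : Pt → ℝ) (x : Pt) : ℝ :=
  s x * normTaxSq ϑ x * cofDet ϑ x

/-- The coframe transformed by an element of B²(M). -/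
def tildeCoframe (ϑ : Fin 4 → Pt → Fin 4 → ℝ) (f : Pt → ℂ) : Fin 4 → Pt → Fin 4 → ℝ :=
  ![fun x α => (((lC ϑ x α) + (nC ϑ x α + f x * (starRingEnd ℂ) (mC ϑ x α)
      + (starRingEnd ℂ) (f x) * mC ϑ x α + (Complex.normSq (f x) : ℂ) * lC ϑ x α)) / 2).re,
    fun x α => (mC ϑ x α + f x * lC ϑ x α).re,
    fun x α => (mC ϑ x α + f x * lC ϑ x α).im,
    fun x α => (((lC ϑ x α) - (nC ϑ x α + f x * (starRingEnd ℂ) (mC ϑ x α)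
      + (starRingEnd ℂ) (f x) * mC ϑ x α + (Complex.normSq (f x) : ℂ) * lC ϑ x α)) / 2).re]


/-! ### Auxiliary lemmas for the gauge-invariance proof -/

lemma gn_pd_add {f g : Pt → ℝ} {x : Pt} (hf : DifferentiableAt ℝ f x)
    (hg : DifferentiableAt ℝ g x) (μ : Fin 4) :
    pd μ (fun y => f y + g y) x = pd μ f x + pd μ g x := by
  simp only [pd, fderiv_fun_add hf hg, ContinuousLinearMap.add_apply]

lemma gn_pd_const_mul {f : Pt → ℝ} {x : Pt} (hf : DifferentiableAt ℝ f x) (c : ℝ) (μ : Fin 4) :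
    pd μ (fun y => c * f y) x = c * pd μ f x := by
  simp only [pd, fderiv_const_mul hf c, ContinuousLinearMap.smul_apply, smul_eq_mul]

lemma gn_pd_mul {f g : Pt → ℝ} {x : Pt} (hf : DifferentiableAt ℝ f x)
    (hg : DifferentiableAt ℝ g x) (μ : Fin 4) :
    pd μ (fun y => f y * g y) x = pd μ f x * g x + f x * pd μ g x := by
  simp only [pd, fderiv_fun_mul hf hg, ContinuousLinearMap.add_apply,
    ContinuousLinearMap.smul_apply, smul_eq_mul]
  ring

lemma gn_pd_sum {ι : Type*} {s : Finset ι} {F : ι → Pt → ℝ} {x : Pt}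
    (h : ∀ i ∈ s, DifferentiableAt ℝ (F i) x) (μ : Fin 4) :
    pd μ (fun y => ∑ i ∈ s, F i y) x = ∑ i ∈ s, pd μ (F i) x := by
  simp only [pd, fderiv_fun_sum h, ContinuousLinearMap.coe_sum', Finset.sum_apply]

lemma gn_pd_ofReal {g : Pt → ℝ} {x : Pt} (h : DifferentiableAt ℝ g x) (μ : Fin 4) :
    pd μ (fun y => ((g y : ℝ) : ℂ)) x = ((pd μ g x : ℝ) : ℂ) := by
  have h2 : HasFDerivAt (fun y => ((g y : ℝ) : ℂ))
      (Complex.ofRealCLM.comp (fderiv ℝ g x)) x :=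
    Complex.ofRealCLM.hasFDerivAt.comp x h.hasFDerivAt
  simp [pd, h2.fderiv]

lemma gn_sumsplit (v w : Fin 4 → ℝ) (F G H : Fin 4 → Fin 4 → ℝ) :
    ∑ β : Fin 4, ∑ μ : Fin 4, v β * w μ * (F β μ + G β μ - H β μ)
    = (∑ β : Fin 4, ∑ μ : Fin 4, v β * w μ * F β μ)
      + (∑ β : Fin 4, ∑ μ : Fin 4, v β * w μ * G β μ)
      - ∑ β : Fin 4, ∑ μ : Fin 4, v β * w μ * H β μ := by
  simp only [mul_add, mul_sub, Finset.sum_add_distrib, Finset.sum_sub_distrib]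

lemma gn_cancel (v : Fin 4 → ℝ) (Q1 : Fin 4 → Fin 4 → ℝ) :
    ∑ β : Fin 4, ∑ μ : Fin 4, v β * v μ * Q1 β μ
    = ∑ β : Fin 4, ∑ μ : Fin 4, v β * v μ * Q1 μ β := by
  rw [Finset.sum_comm]
  exact Finset.sum_congr rfl fun β _ => Finset.sum_congr rfl fun μ _ => by ring

lemma gn_splitA (Gi T : Fin 4 → Fin 4 → ℝ) (R S : Fin 4 → ℝ) :
    ∑ β : Fin 4, ∑ γ : Fin 4, Gi β γ * (T 0 γ + T 3 γ) * (R β - S β)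
    = (∑ β : Fin 4, (∑ γ : Fin 4, Gi β γ * (T 0 γ + T 3 γ)) * R β)
      - ∑ β : Fin 4, (∑ γ : Fin 4, Gi β γ * (T 0 γ + T 3 γ)) * S β := by
  simp only [Finset.sum_mul, mul_sub, Finset.sum_sub_distrib]

lemma gn_reshape (Gi T : Fin 4 → Fin 4 → ℝ) (F : Fin 4 → Fin 4 → ℝ) :
    (∑ β : Fin 4, (∑ γ : Fin 4, Gi β γ * (T 0 γ + T 3 γ)) *
        (∑ δ : Fin 4, (1/2 * ∑ μ : Fin 4, Gi δ μ * F β μ) * (T 0 δ + T 3 δ)))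
    = 1/2 * ∑ β : Fin 4, ∑ μ : Fin 4,
        (∑ γ : Fin 4, Gi β γ * (T 0 γ + T 3 γ)) *
          (∑ δ : Fin 4, Gi δ μ * (T 0 δ + T 3 δ)) * F β μ := by
  simp only [Fin.sum_univ_four]
  ring

lemma gn_algA (T : Fin 4 → Fin 4 → ℝ) (D : Fin 4 → Fin 4 → Fin 4 → ℝ) (u : Fin 4 → ℝ)
    (α : Fin 4)
    (hV : ∀ k, (∑ μ : Fin 4, T k μ * u μ) = oM k 0 + oM k 3) :
    1/2 * (∑ β : Fin 4, ∑ μ : Fin 4, u β * u μ *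
        (∑ j : Fin 4, ∑ k : Fin 4, oM j k * (D α j β * T k μ + T j β * D α k μ)))
    = ∑ β : Fin 4, u β * (D α 0 β + D α 3 β) := by
  have hV0 := hV 0; have hV1 := hV 1; have hV2 := hV 2; have hV3 := hV 3
  simp only [Fin.sum_univ_four] at hV0 hV1 hV2 hV3 ⊢
  simp only [show oM 0 0 = 1 from by simp [oM], show oM 0 1 = 0 from by simp [oM], show oM 0 2 = 0 from by simp [oM], show oM 0 3 = 0 from by simp [oM], show oM 1 0 = 0 from by simp [oM], show oM 1 1 = -1 from by simp [oM], show oM 1 2 = 0 from by simp [oM], show oM 1 3 = 0 from by simp [oM], show oM 2 0 = 0 from by simp [oM], show oM 2 1 = 0 from by simp [oM], show oM 2 2 = -1 from by simp [oM], show oM 2 3 = 0 from by simp [oM], show oM 3 0 = 0 from by simp [oM], show oM 3 1 = 0 from by simp [oM], show oM 3 2 = 0 from by simp [oM], show oM 3 3 = -1 from by simp [oM]] at hV0 hV1 hV2 hV3 ⊢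
  linear_combination
      (D α 0 0 * u 0 + D α 0 1 * u 1 + D α 0 2 * u 2 + D α 0 3 * u 3) * hV0
    - (D α 1 0 * u 0 + D α 1 1 * u 1 + D α 1 2 * u 2 + D α 1 3 * u 3) * hV1
    - (D α 2 0 * u 0 + D α 2 1 * u 1 + D α 2 2 * u 2 + D α 2 3 * u 3) * hV2
    - (D α 3 0 * u 0 + D α 3 1 * u 1 + D α 3 2 * u 2 + D α 3 3 * u 3) * hV3

lemma gn_key (U : Set Pt) (hU : IsOpen U) (ϑ : Fin 4 → Pt → Fin 4 → ℝ)
    (hreg : ∀ j, ContDiffOn ℝ 1 (ϑ j) U) (x : Pt) (hx : x ∈ U)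
    (hdet : 0 < cofDet ϑ x) (α : Fin 4) :
    ∑ β : Fin 4, ∑ γ : Fin 4, ginv ϑ x β γ * (ϑ 0 x γ + ϑ 3 x γ) *
      (pd α (fun y => ϑ 0 y β + ϑ 3 y β) x
        - ∑ δ : Fin 4, Chr ϑ δ α β x * (ϑ 0 x δ + ϑ 3 x δ)) = 0 := by
  have hdA : ∀ (j : Fin 4) (β : Fin 4), DifferentiableAt ℝ (fun y => ϑ j y β) x := by
    intro j β
    exact (differentiableAt_pi.mp
      (((hreg j).differentiableOn one_ne_zero).differentiableAt (hU.mem_nhds hx))) β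
  have hpg : ∀ (μ γ δ : Fin 4), pd μ (fun y => gmat ϑ y γ δ) x =
      ∑ j : Fin 4, ∑ k : Fin 4, oM j k *
        (pd μ (fun y => ϑ j y γ) x * ϑ k x δ + ϑ j x γ * pd μ (fun y => ϑ k y δ) x) := by
    intro μ γ δ
    have e : (fun y => gmat ϑ y γ δ)
        = fun y => ∑ j : Fin 4, ∑ k : Fin 4, oM j k * (ϑ j y γ * ϑ k y δ) := by
      funext y
      simp only [gmat, Matrix.of_apply, mul_assoc]
    rw [e, gn_pd_sum (fun j _ => DifferentiableAt.fun_sum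
      fun k _ => ((hdA j γ).fun_mul (hdA k δ)).const_mul (oM j k)) μ]
    refine Finset.sum_congr rfl fun j _ => ?_
    rw [gn_pd_sum (fun k _ => ((hdA j γ).fun_mul (hdA k δ)).const_mul (oM j k)) μ]
    refine Finset.sum_congr rfl fun k _ => ?_
    rw [gn_pd_const_mul ((hdA j γ).fun_mul (hdA k δ)) (oM j k) μ,
      gn_pd_mul (hdA j γ) (hdA k δ) μ]
  have hAu : IsUnit (Matrix.of fun j a => ϑ j x a : Matrix (Fin 4) (Fin 4) ℝ).det :=
    isUnit_iff_ne_zero.mpr (ne_of_gt hdet)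
  have hO2 : (Matrix.of oM : Matrix (Fin 4) (Fin 4) ℝ) * Matrix.of oM = 1 := by
    ext a b
    fin_cases a <;> fin_cases b <;>
      simp [Matrix.mul_apply, Fin.sum_univ_four, oM, Matrix.one_apply]
  have hG : gmat ϑ x = (Matrix.of fun j a => ϑ j x a)ᵀ * Matrix.of oM *
      (Matrix.of fun j a => ϑ j x a) := by
    ext a b
    simp only [gmat, Matrix.of_apply, Matrix.mul_apply, Matrix.transpose_apply,
      Fin.sum_univ_four]
    simp only [show oM 0 0 = 1 from by simp [oM], show oM 0 1 = 0 from by simp [oM], show oM 0 2 = 0 from by simp [oM], show oM 0 3 = 0 from by simp [oM], show oM 1 0 = 0 from by simp [oM], show oM 1 1 = -1 from by simp [oM], show oM 1 2 = 0 from by simp [oM], show oM 1 3 = 0 from by simp [oM], show oM 2 0 = 0 from by simp [oM], show oM 2 1 = 0 from by simp [oM], show oM 2 2 = -1 from by simp [oM], show oM 2 3 = 0 from by simp [oM], show oM 3 0 = 0 from by simp [oM], show oM 3 1 = 0 from by simp [oM], show oM 3 2 = 0 from by simp [oM], show oM 3 3 = -1 from by simp [oM]]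
    ring
  have hOinv : (Matrix.of oM : Matrix (Fin 4) (Fin 4) ℝ)⁻¹ = Matrix.of oM :=
    Matrix.inv_eq_right_inv hO2
  have egi : ginv ϑ x = (gmat ϑ x)⁻¹ := rfl
  have hGi : ginv ϑ x = (Matrix.of fun j a => ϑ j x a)⁻¹ * Matrix.of oM *
      ((Matrix.of fun j a => ϑ j x a)ᵀ)⁻¹ := by
    rw [egi, hG, Matrix.mul_inv_rev, Matrix.mul_inv_rev, hOinv, ← Matrix.mul_assoc]
  have hfmat : (Matrix.of fun j a => ϑ j x a) * ginv ϑ x *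
      (Matrix.of fun j a => ϑ j x a)ᵀ = Matrix.of oM := by
    rw [hGi]
    have h1 : (Matrix.of fun j a => ϑ j x a) * (Matrix.of fun j a => ϑ j x a)⁻¹ = 1 :=
      Matrix.mul_nonsing_inv _ hAu
    have h2 : ((Matrix.of fun j a => ϑ j x a)ᵀ)⁻¹ * (Matrix.of fun j a => ϑ j x a)ᵀ = 1 :=
      Matrix.nonsing_inv_mul _ (by rwa [Matrix.det_transpose])
    calc (Matrix.of fun j a => ϑ j x a) *
          ((Matrix.of fun j a => ϑ j x a)⁻¹ * Matrix.of oM *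
            ((Matrix.of fun j a => ϑ j x a)ᵀ)⁻¹) * (Matrix.of fun j a => ϑ j x a)ᵀ
        = ((Matrix.of fun j a => ϑ j x a) * (Matrix.of fun j a => ϑ j x a)⁻¹) *
            Matrix.of oM *
            (((Matrix.of fun j a => ϑ j x a)ᵀ)⁻¹ * (Matrix.of fun j a => ϑ j x a)ᵀ) := by
          simp only [Matrix.mul_assoc]
      _ = Matrix.of oM := by rw [h1, h2, Matrix.one_mul, Matrix.mul_one]
  have hgsym : (gmat ϑ x)ᵀ = gmat ϑ x := by
    ext a b
    simp only [gmat, Matrix.transpose_apply, Matrix.of_apply, Fin.sum_univ_four]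
    simp only [show oM 0 0 = 1 from by simp [oM], show oM 0 1 = 0 from by simp [oM], show oM 0 2 = 0 from by simp [oM], show oM 0 3 = 0 from by simp [oM], show oM 1 0 = 0 from by simp [oM], show oM 1 1 = -1 from by simp [oM], show oM 1 2 = 0 from by simp [oM], show oM 1 3 = 0 from by simp [oM], show oM 2 0 = 0 from by simp [oM], show oM 2 1 = 0 from by simp [oM], show oM 2 2 = -1 from by simp [oM], show oM 2 3 = 0 from by simp [oM], show oM 3 0 = 0 from by simp [oM], show oM 3 1 = 0 from by simp [oM], show oM 3 2 = 0 from by simp [oM], show oM 3 3 = -1 from by simp [oM]]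
    ring
  have hsym : ∀ a b, ginv ϑ x a b = ginv ϑ x b a := by
    have ht : (ginv ϑ x)ᵀ = ginv ϑ x := by
      rw [egi, Matrix.transpose_nonsing_inv, hgsym]
    intro a b
    have h3 := congr_fun (congr_fun ht b) a
    simpa [Matrix.transpose_apply] using h3
  have hfr : ∀ j k : Fin 4,
      (∑ β : Fin 4, ∑ γ : Fin 4, ϑ j x β * ginv ϑ x β γ * ϑ k x γ) = oM j k := by
    intro j k
    have h3 := congr_fun (congr_fun hfmat j) k
    simp only [Matrix.mul_apply, Matrix.transpose_apply, Matrix.of_apply,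
      Fin.sum_univ_four] at h3
    simp only [Fin.sum_univ_four]
    linear_combination h3
  have hVv : ∀ k : Fin 4, (∑ μ : Fin 4, ϑ k x μ *
      (∑ γ : Fin 4, ginv ϑ x μ γ * (ϑ 0 x γ + ϑ 3 x γ))) = oM k 0 + oM k 3 := by
    intro k
    have h0 := hfr k 0
    have h3 := hfr k 3
    simp only [Fin.sum_univ_four] at h0 h3 ⊢
    linear_combination h0 + h3
  have husym : ∀ μ : Fin 4, (∑ δ : Fin 4, ginv ϑ x δ μ * (ϑ 0 x δ + ϑ 3 x δ))
      = ∑ δ : Fin 4, ginv ϑ x μ δ * (ϑ 0 x δ + ϑ 3 x δ) :=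
    fun μ => Finset.sum_congr rfl fun δ _ => by rw [hsym]
  have hDl : ∀ β : Fin 4, pd α (fun y => ϑ 0 y β + ϑ 3 y β) x
      = pd α (fun y => ϑ 0 y β) x + pd α (fun y => ϑ 3 y β) x :=
    fun β => gn_pd_add (hdA 0 β) (hdA 3 β) α
  simp only [Chr, hpg, hDl]
  have hA2 := gn_splitA (fun a b => ginv ϑ x a b) (fun j b => ϑ j x b)
      (fun β => pd α (fun y => ϑ 0 y β) x + pd α (fun y => ϑ 3 y β) x)
      (fun β => ∑ δ : Fin 4, (1/2 * ∑ μ : Fin 4, ginv ϑ x δ μ *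
        ((∑ j : Fin 4, ∑ k : Fin 4, oM j k * (pd α (fun y => ϑ j y β) x * ϑ k x μ + ϑ j x β * pd α (fun y => ϑ k y μ) x)) + (∑ j : Fin 4, ∑ k : Fin 4, oM j k * (pd β (fun y => ϑ j y α) x * ϑ k x μ + ϑ j x α * pd β (fun y => ϑ k y μ) x)) - (∑ j : Fin 4, ∑ k : Fin 4, oM j k * (pd μ (fun y => ϑ j y α) x * ϑ k x β + ϑ j x α * pd μ (fun y => ϑ k y β) x)))) * (ϑ 0 x δ + ϑ 3 x δ))
  have hB2 := gn_reshape (fun a b => ginv ϑ x a b) (fun j b => ϑ j x b)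
      (fun β μ => (∑ j : Fin 4, ∑ k : Fin 4, oM j k * (pd α (fun y => ϑ j y β) x * ϑ k x μ + ϑ j x β * pd α (fun y => ϑ k y μ) x)) + (∑ j : Fin 4, ∑ k : Fin 4, oM j k * (pd β (fun y => ϑ j y α) x * ϑ k x μ + ϑ j x α * pd β (fun y => ϑ k y μ) x)) - (∑ j : Fin 4, ∑ k : Fin 4, oM j k * (pd μ (fun y => ϑ j y α) x * ϑ k x β + ϑ j x α * pd μ (fun y => ϑ k y β) x)))
  have hC2 := gn_sumsplit (fun β => ∑ γ : Fin 4, ginv ϑ x β γ * (ϑ 0 x γ + ϑ 3 x γ)) (fun μ => ∑ δ : Fin 4, ginv ϑ x δ μ * (ϑ 0 x δ + ϑ 3 x δ))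
      (fun β μ => (∑ j : Fin 4, ∑ k : Fin 4, oM j k * (pd α (fun y => ϑ j y β) x * ϑ k x μ + ϑ j x β * pd α (fun y => ϑ k y μ) x))) (fun β μ => (∑ j : Fin 4, ∑ k : Fin 4, oM j k * (pd β (fun y => ϑ j y α) x * ϑ k x μ + ϑ j x α * pd β (fun y => ϑ k y μ) x))) (fun β μ => (∑ j : Fin 4, ∑ k : Fin 4, oM j k * (pd μ (fun y => ϑ j y α) x * ϑ k x β + ϑ j x α * pd μ (fun y => ϑ k y β) x)))
  have hD2 := gn_cancel (fun β => ∑ γ : Fin 4, ginv ϑ x β γ * (ϑ 0 x γ + ϑ 3 x γ)) (fun β μ => (∑ j : Fin 4, ∑ k : Fin 4, oM j k * (pd β (fun y => ϑ j y α) x * ϑ k x μ + ϑ j x α * pd β (fun y => ϑ k y μ) x)))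
  have hE2 := gn_algA (fun j b => ϑ j x b) (fun μ j b => pd μ (fun y => ϑ j y b) x)
      (fun β => ∑ γ : Fin 4, ginv ϑ x β γ * (ϑ 0 x γ + ϑ 3 x γ)) α hVv
  simp only [husym] at hB2 hC2
  linear_combination hA2 - hB2 - (1/2 : ℝ) * hC2 - (1/2 : ℝ) * hD2 - hE2

lemma gn_keyC (U : Set Pt) (hU : IsOpen U) (ϑ : Fin 4 → Pt → Fin 4 → ℝ)
    (hreg : ∀ j, ContDiffOn ℝ 1 (ϑ j) U) (x : Pt) (hx : x ∈ U)
    (hdet : 0 < cofDet ϑ x) (α : Fin 4) :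
    (∑ β : Fin 4, ∑ γ : Fin 4, (ginv ϑ x β γ : ℂ) * lC ϑ x γ *
      covC ϑ (fun y b => lC ϑ y b) α β x) = 0 := by
  have hdA : ∀ (j : Fin 4) (β : Fin 4), DifferentiableAt ℝ (fun y => ϑ j y β) x := by
    intro j β
    exact (differentiableAt_pi.mp
      (((hreg j).differentiableOn one_ne_zero).differentiableAt (hU.mem_nhds hx))) β
  have hpdl : ∀ β : Fin 4, pd α (fun y => lC ϑ y β) x
      = ((pd α (fun y => ϑ 0 y β + ϑ 3 y β) x : ℝ) : ℂ) := by
    intro β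
    have e : (fun y => lC ϑ y β) = fun y => ((ϑ 0 y β + ϑ 3 y β : ℝ) : ℂ) := by
      funext y
      simp [lC]
    rw [e]
    exact gn_pd_ofReal ((hdA 0 β).add (hdA 3 β)) α
  have hk := gn_key U hU ϑ hreg x hx hdet α
  simp only [covC, hpdl]
  simp only [lC]
  exact_mod_cast hk

/-- Gauge invariance of the Griffiths–Newing covector: the transformed coframe
(l̃ = l, m̃ = m + fl, ñ = n + fm̄ + f̄m + |f|²l) defines the same metric and the same
covector field v. -/
theorem griffiths_newing_gauge_invariance
    (U : Set Pt) (hU : IsOpen U) (ϑ : Fin 4 → Pt → Fin 4 → ℝ)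
    (hreg : ∀ j, ContDiffOn ℝ 1 (ϑ j) U)
    (hdet : ∀ x ∈ U, 0 < cofDet ϑ x)
    (f : Pt → ℂ) (hf : ContDiffOn ℝ 1 f U) :
    ∀ x ∈ U,
      gmat (tildeCoframe ϑ f) x = gmat ϑ x ∧
      ∀ α : Fin 4, vGN (tildeCoframe ϑ f) α x = vGN ϑ α x := by
  have hth0 : ∀ y a, tildeCoframe ϑ f 0 y a
      = ϑ 0 y a + ((f y).re * ϑ 1 y a + (f y).im * ϑ 2 y a)
        + (((f y).re ^ 2 + (f y).im ^ 2) / 2) * (ϑ 0 y a + ϑ 3 y a) := by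
    intro y a
    show (((lC ϑ y a) + (nC ϑ y a + f y * (starRingEnd ℂ) (mC ϑ y a)
      + (starRingEnd ℂ) (f y) * mC ϑ y a + (Complex.normSq (f y) : ℂ) * lC ϑ y a)) / 2).re = _
    simp [lC, mC, nC, Complex.normSq_apply, Complex.div_re, Complex.normSq_apply,
      Complex.add_re, Complex.add_im, Complex.mul_re, Complex.mul_im]
    ring
  have hth3 : ∀ y a, tildeCoframe ϑ f 3 y a
      = ϑ 3 y a - ((f y).re * ϑ 1 y a + (f y).im * ϑ 2 y a)
        - (((f y).re ^ 2 + (f y).im ^ 2) / 2) * (ϑ 0 y a + ϑ 3 y a) := by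
    intro y a
    show (((lC ϑ y a) - (nC ϑ y a + f y * (starRingEnd ℂ) (mC ϑ y a)
      + (starRingEnd ℂ) (f y) * mC ϑ y a + (Complex.normSq (f y) : ℂ) * lC ϑ y a)) / 2).re = _
    simp [lC, mC, nC, Complex.normSq_apply, Complex.div_re, Complex.normSq_apply,
      Complex.add_re, Complex.add_im, Complex.sub_re, Complex.mul_re, Complex.mul_im]
    ring
  have hth1 : ∀ y a, tildeCoframe ϑ f 1 y a
      = ϑ 1 y a + (f y).re * (ϑ 0 y a + ϑ 3 y a) := by
    intro y a
    show (mC ϑ y a + f y * lC ϑ y a).re = _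
    simp [lC, mC, Complex.add_re, Complex.mul_re]
    try ring
  have hth2 : ∀ y a, tildeCoframe ϑ f 2 y a
      = ϑ 2 y a + (f y).im * (ϑ 0 y a + ϑ 3 y a) := by
    intro y a
    show (mC ϑ y a + f y * lC ϑ y a).im = _
    simp [lC, mC, Complex.add_im, Complex.mul_im]
    try ring
  have hg : gmat (tildeCoframe ϑ f) = gmat ϑ := by
    funext y
    ext a b
    simp only [gmat, Matrix.of_apply, Fin.sum_univ_four, hth0, hth1, hth2, hth3]
    simp only [show oM 0 0 = 1 from by simp [oM], show oM 0 1 = 0 from by simp [oM], show oM 0 2 = 0 from by simp [oM], show oM 0 3 = 0 from by simp [oM], show oM 1 0 = 0 from by simp [oM], show oM 1 1 = -1 from by simp [oM], show oM 1 2 = 0 from by simp [oM], show oM 1 3 = 0 from by simp [oM], show oM 2 0 = 0 from by simp [oM], show oM 2 1 = 0 from by simp [oM], show oM 2 2 = -1 from by simp [oM], show oM 2 3 = 0 from by simp [oM], show oM 3 0 = 0 from by simp [oM], show oM 3 1 = 0 from by simp [oM], show oM 3 2 = 0 from by simp [oM], show oM 3 3 = -1 from by simp [oM]]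
    ring
  have hlC : lC (tildeCoframe ϑ f) = lC ϑ := by
    funext y a
    simp only [lC, hth0, hth3]
    push_cast
    ring
  have hmC : ∀ y a, mC (tildeCoframe ϑ f) y a = mC ϑ y a + f y * lC ϑ y a := by
    intro y a
    simp only [mC, lC, hth1, hth2]
    apply Complex.ext <;>
      simp [Complex.add_re, Complex.add_im, Complex.mul_re, Complex.mul_im] <;> ring
  have hlm : lmForm (tildeCoframe ϑ f) = lmForm ϑ := by
    funext y a b
    simp only [lmForm, hlC]
    simp only [hmC]
    ring
  have hginv : ginv (tildeCoframe ϑ f) = ginv ϑ := by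
    funext y
    show (gmat (tildeCoframe ϑ f) y)⁻¹ = (gmat ϑ y)⁻¹
    rw [hg]
  have hChr : Chr (tildeCoframe ϑ f) = Chr ϑ := by
    funext b a c y
    simp only [Chr, hginv, hg]
  have hcovF : covF (tildeCoframe ϑ f) (fun y a b => lmForm (tildeCoframe ϑ f) y a b)
      = covF ϑ (fun y a b => lmForm ϑ y a b) := by
    funext c a b y
    simp only [covF, hChr, hlm]
  have hcovC : covC (tildeCoframe ϑ f) (fun y b => lC (tildeCoframe ϑ f) y b)
      = covC ϑ (fun y b => lC ϑ y b) := by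
    funext a b y
    simp only [covC, hChr, hlC]
  intro x hx
  refine ⟨congrFun hg x, fun α => ?_⟩
  have hZ := gn_keyC U hU ϑ hreg x hx (hdet x hx) α
  simp only [vGN, hginv, hcovF, hcovC, hmC]
  simp only [Fin.sum_univ_four] at hZ ⊢
  linear_combination (-(f x)) * hZ
end
end

section
/- Conformal invariance of the quadratic teleparallel Lagrangian: define ‖T^ax‖² := g^{αα′} g^{ββ′} g^{γγ′} T^ax_{αβγ} T^ax_{α′β′γ′} and the density of the 4-form L(ϑ,s) := s·‖T^ax‖²·∗1 as s·‖T^ax‖²·det(ϑ^j_α). For every continuously differentiable coframe ϑ on U, every continuously differentiable s : U → (0,∞) and every continuously differentiable h : U → ℝ, replacing ϑ^j by e^h ϑ^j (hence g_{αβ} by e^{2h} g_{αβ}) and s by e^{−2h} s leaves this density unchanged at every point of U. -/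
noncomputable section

open scoped Matrix

private lemma smul_inv4 (c : ℝ) (hc : c ≠ 0) (A : Matrix (Fin 4) (Fin 4) ℝ) :
    (c • A)⁻¹ = c⁻¹ • A⁻¹ := by
  rw [Matrix.inv_def, Matrix.inv_def, Matrix.det_smul, Matrix.adjugate_smul,
    Ring.inverse_eq_inv, Ring.inverse_eq_inv]
  ext i j
  simp only [Matrix.smul_apply, smul_eq_mul, Fintype.card_fin]
  rcases eq_or_ne A.det 0 with hd | hd
  · simp [hd]
  · field_simp

set_option maxHeartbeats 2000000 in
/-- Conformal invariance of the quadratic teleparallel Lagrangian: replacing ϑ^j by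
e^h ϑ^j and s by e^{−2h} s leaves the density s·‖T^ax‖²·det(ϑ^j_α) unchanged. -/
theorem quadratic_lagrangian_conformal_invariance
    (U : Set Pt) (hU : IsOpen U) (ϑ : Fin 4 → Pt → Fin 4 → ℝ)
    (hreg : ∀ j, ContDiffOn ℝ 1 (ϑ j) U)
    (hdet : ∀ x ∈ U, 0 < cofDet ϑ x)
    (s : Pt → ℝ) (hs : ContDiffOn ℝ 1 s U) (hspos : ∀ x ∈ U, 0 < s x)
    (h : Pt → ℝ) (hh : ContDiffOn ℝ 1 h U) :
    ∀ x ∈ U,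
      quadDensity (fun j y δ => Real.exp (h y) * ϑ j y δ)
        (fun y => Real.exp (-2 * h y) * s y) x = quadDensity ϑ s x := by
  intro x hx
  set E := Real.exp (h x) with hE
  have hEpos : (0:ℝ) < E := Real.exp_pos _
  have hEne : E ≠ 0 := ne_of_gt hEpos
  have hhd : DifferentiableAt ℝ h x := (hh.contDiffAt (hU.mem_nhds hx)).differentiableAt one_ne_zero
  have hθd : ∀ (k : Fin 4) (δ : Fin 4), DifferentiableAt ℝ (fun y => ϑ k y δ) x := fun k δ =>
    (differentiableAt_pi.mp (((hreg k).contDiffAt (hU.mem_nhds hx)).differentiableAt one_ne_zero)) δ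
  have hpd : ∀ (k γ δ : Fin 4),
      pd γ (fun y => Real.exp (h y) * ϑ k y δ) x
        = E * pd γ h x * ϑ k x δ + E * pd γ (fun y => ϑ k y δ) x := by
    intro k γ δ
    have hfe : HasFDerivAt (fun y => Real.exp (h y)) (Real.exp (h x) • fderiv ℝ h x) x :=
      hhd.hasFDerivAt.exp
    have hge : HasFDerivAt (fun y => ϑ k y δ) (fderiv ℝ (fun y => ϑ k y δ) x) x :=
      (hθd k δ).hasFDerivAt
    have hm : fderiv ℝ (fun y => Real.exp (h y) * ϑ k y δ) x = _ := (hfe.mul hge).fderiv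
    simp only [pd, hm, ContinuousLinearMap.add_apply, ContinuousLinearMap.smul_apply,
      smul_eq_mul]
    ring
  have hTax : ∀ α β γ : Fin 4,
      Tax (fun j y δ => Real.exp (h y) * ϑ j y δ) α β γ x = (E * E) * Tax ϑ α β γ x := by
    intro α β γ
    simp only [Tax, dcov, hpd, Fin.sum_univ_four, oM, reduceIte, one_mul, neg_mul,
      zero_mul, mul_zero, add_zero, zero_add,
      show (0:Fin 4) ≠ 1 by decide, show (0:Fin 4) ≠ 2 by decide, show (0:Fin 4) ≠ 3 by decide,
      show (1:Fin 4) ≠ 0 by decide, show (1:Fin 4) ≠ 2 by decide, show (1:Fin 4) ≠ 3 by decide,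
      show (2:Fin 4) ≠ 0 by decide, show (2:Fin 4) ≠ 1 by decide, show (2:Fin 4) ≠ 3 by decide,
      show (3:Fin 4) ≠ 0 by decide, show (3:Fin 4) ≠ 1 by decide, show (3:Fin 4) ≠ 2 by decide,
      if_neg, if_pos]
    ring
  have hgmat : gmat (fun j y δ => Real.exp (h y) * ϑ j y δ) x = (E * E) • gmat ϑ x := by
    ext α β
    simp only [gmat, Matrix.smul_apply, Matrix.of_apply, smul_eq_mul, Fin.sum_univ_four]
    ring
  have hginv : ∀ α β : Fin 4,
      ginv (fun j y δ => Real.exp (h y) * ϑ j y δ) x α β = (E * E)⁻¹ * ginv ϑ x α β := by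
    intro α β
    rw [ginv, hgmat, smul_inv4 _ (mul_ne_zero hEne hEne)]
    simp [ginv, Matrix.smul_apply]
  have hdet' : cofDet (fun j y δ => Real.exp (h y) * ϑ j y δ) x = E^4 * cofDet ϑ x := by
    have : (Matrix.of fun j α => Real.exp (h x) * ϑ j x α)
        = E • (Matrix.of fun j α => ϑ j x α) := by
      ext j α; simp [hE]
    rw [cofDet, this, Matrix.det_smul, cofDet]
    simp
  have hN : normTaxSq (fun j y δ => Real.exp (h y) * ϑ j y δ) x
      = (E * E)⁻¹ * normTaxSq ϑ x := by
    simp only [normTaxSq, hginv, hTax, Finset.mul_sum]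
    refine Finset.sum_congr rfl fun α _ => Finset.sum_congr rfl fun α' _ =>
      Finset.sum_congr rfl fun β _ => Finset.sum_congr rfl fun β' _ =>
      Finset.sum_congr rfl fun γ _ => Finset.sum_congr rfl fun γ' _ => ?_
    field_simp
  simp only [quadDensity, hN, hdet']
  have hexp : Real.exp (-2 * h x) = (E * E)⁻¹ := by
    rw [show (-2 : ℝ) * h x = -(h x + h x) by ring, Real.exp_neg, Real.exp_add, hE]
  rw [hexp]
  field_simp
end
end
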